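/- With φ continuous prefix-monotone and ψ(γ) = Σ_{w∈A*} (1/(|A|+1))^{|w|} φ(wγ) as above: for all α, β ∈ A^ω, φ(α) > φ(β) implies ψ(α) > ψ(β); and ψ(α) > ψ(β) holds if and only if there exists w ∈ A* with φ(wα) > φ(wβ). -/

import Mathlib

open Filter Topology

/-- Concatenation of a finite word with an infinite word. -/
def wcat {A : Type*} (u : List A) (β : ℕ → A) : ℕ → A :=
  fun n => if h : n < u.length then u.get ⟨n, h⟩ else β (n - u.length)

/-- A payoff is prefix-monotone if there are no finite words `u, v` and infinite words
`β, γ` with `φ(uβ) > φ(uγ)` and `φ(vβ) < φ(vγ)`. -/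
def PrefixMonotone {A : Type*} (φ : (ℕ → A) → ℝ) : Prop :=
  ¬ ∃ (u v : List A) (β γ : ℕ → A),
      φ (wcat u β) > φ (wcat u γ) ∧ φ (wcat v β) < φ (wcat v γ)

lemma summable_pow_length {A : Type*} [Fintype A] [Nonempty A] :
    Summable (fun w : List A => (1 / ((Fintype.card A : ℝ) + 1)) ^ w.length) := by
  set c : ℝ := 1 / ((Fintype.card A : ℝ) + 1) with hc
  have hk : (1 : ℝ) ≤ (Fintype.card A : ℝ) := by
    exact_mod_cast Fintype.card_pos
  have hc0 : 0 < c := by positivity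
  haveI : ∀ n : ℕ, Fintype {w : List A // w.length = n} :=
    fun n => (inferInstance : Fintype (List.Vector A n))
  have hcard : ∀ n : ℕ, (Fintype.card {w : List A // w.length = n} : ℝ)
      = (Fintype.card A : ℝ) ^ n := by
    intro n
    have h1 : Fintype.card {w : List A // w.length = n}
        = Fintype.card (List.Vector A n) := Fintype.card_congr (Equiv.refl _)
    rw [h1, card_vector]
    push_cast
    ring
  -- transfer along the equivalence with sigma of vectors
  rw [← (Equiv.sigmaFiberEquiv (List.length : List A → ℕ)).summable_iff]
  have hfib : ∀ p : Σ n : ℕ, {w : List A // w.length = n},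
      c ^ ((Equiv.sigmaFiberEquiv (List.length : List A → ℕ)) p).length = c ^ p.1 := by
    rintro ⟨n, v⟩
    simp [Equiv.sigmaFiberEquiv, v.2]
  have : Summable (fun p : Σ n : ℕ, {w : List A // w.length = n} => c ^ p.1) := by
    rw [summable_sigma_of_nonneg (fun p => by positivity)]
    constructor
    · intro n; exact summable_of_finite_support (Set.toFinite _)
    · have : Summable (fun n : ℕ => ((Fintype.card A : ℝ) * c) ^ n) := by
        apply summable_geometric_of_lt_one (by positivity)
        rw [hc]
        rw [mul_one_div, div_lt_one (by linarith)]
        linarith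
      refine this.congr fun n => ?_
      rw [tsum_fintype]
      show (((Fintype.card A : ℝ)) * c) ^ n = ∑ _b : {w : List A // w.length = n}, c ^ n
      rw [Finset.sum_const, Finset.card_univ, nsmul_eq_mul, hcard n, mul_pow]

  exact this.congr fun p => (hfib p).symm

theorem psi_order_characterization
    {A : Type*} [Fintype A] [Nonempty A] [TopologicalSpace A] [DiscreteTopology A]
    (φ : (ℕ → A) → ℝ) (hcont : Continuous φ) (hpm : PrefixMonotone φ)
    (ψ : (ℕ → A) → ℝ)
    (hψ : ∀ γ : ℕ → A,
      ψ γ = ∑' w : List A,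
        (1 / ((Fintype.card A : ℝ) + 1)) ^ w.length * φ (wcat w γ)) :
    (∀ α β : ℕ → A, φ α > φ β → ψ α > ψ β) ∧
    (∀ α β : ℕ → A, ψ α > ψ β ↔ ∃ w : List A, φ (wcat w α) > φ (wcat w β)) := by
  set c : ℝ := 1 / ((Fintype.card A : ℝ) + 1) with hc
  have hc0 : 0 < c := by positivity
  -- boundedness of φ
  obtain ⟨M, hM⟩ : ∃ M, ∀ γ : ℕ → A, ‖φ γ‖ ≤ M := by
    obtain ⟨M, hM⟩ := IsCompact.exists_bound_of_continuousOn isCompact_univ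
      hcont.continuousOn
    exact ⟨M, fun γ => hM γ (Set.mem_univ _)⟩
  -- summability
  have hsum : ∀ γ : ℕ → A, Summable (fun w : List A => c ^ w.length * φ (wcat w γ)) := by
    intro γ
    apply Summable.of_norm_bounded (g := fun w : List A => c ^ w.length * M)
      (summable_pow_length.mul_right M)
    intro w
    rw [norm_mul, norm_pow, Real.norm_of_nonneg hc0.le]
    exact mul_le_mul_of_nonneg_left (hM _) (by positivity)
  -- prefix monotonicity in usable form
  have hmono : ∀ (u v : List A) (α β : ℕ → A),
      φ (wcat u α) > φ (wcat u β) → φ (wcat v β) ≤ φ (wcat v α) := by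
    intro u v α β h
    by_contra hlt
    exact hpm ⟨u, v, α, β, h, not_le.mp hlt⟩
  -- key implication
  have key : ∀ α β : ℕ → A, (∃ w : List A, φ (wcat w α) > φ (wcat w β)) → ψ α > ψ β := by
    rintro α β ⟨w0, hw0⟩
    rw [hψ α, hψ β]
    apply Summable.tsum_lt_tsum (i := w0) _ _ (hsum β) (hsum α)
    · intro w
      exact mul_le_mul_of_nonneg_left (hmono w0 w α β hw0) (by positivity)
    · exact mul_lt_mul_of_pos_left hw0 (by positivity)
  have emp : ∀ α β : ℕ → A, φ α > φ β → ∃ w : List A, φ (wcat w α) > φ (wcat w β) := by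
    intro α β h
    refine ⟨[], ?_⟩
    have : ∀ γ : ℕ → A, wcat ([] : List A) γ = γ := by
      intro γ; funext n; simp [wcat]
    rwa [this, this]
  refine ⟨fun α β h => key α β (emp α β h), fun α β => ⟨?_, key α β⟩⟩
  intro h
  by_contra hne
  push_neg at hne
  have hle : ∀ w : List A, φ (wcat w α) ≤ φ (wcat w β) := hne
  have : ψ α ≤ ψ β := by
    rw [hψ α, hψ β]
    exact Summable.tsum_le_tsum (fun w => mul_le_mul_of_nonneg_left (hle w) (by positivity))
      (hsum α) (hsum β)
  linarith
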